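/- Let $m_n \in W_n$ satisfy the recursion $m_{k+1} = x_k^2 m_k x_k^{-1}$ with $m_2 = a_1$, and let $v_i = x_{i+2}^2$. Then for all $n \geq 3$: $m_n^{-1} v_{n-3} v_{n-4}\cdots v_2 v_1 = (m_n)^{x_n^{2^{n-2}+2}}$. -/

import Mathlib

/-- Leaves of the complete binary rooted tree of height `n`, recorded as the
big-endian bit string of the (0-indexed) leaf label. -/
abbrev Leaf (n : ℕ) := Fin n → Bool

/-- The function underlying the standard generator `a k` of `Aut(T_n)`:
it flips coordinate `n - k` of a leaf lying on the leftmost spine above level `n - k`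
(this is the permutation `(1, 2^(k-1)+1)(2, 2^(k-1)+2) ⋯ (2^(k-1), 2^k)` of the leaves). -/
def aFun (n k : ℕ) (ℓ : Leaf n) : Leaf n := fun t =>
  if (t : ℕ) = n - k ∧ (∀ s : Fin n, (s : ℕ) < n - k → ℓ s = false) then !(ℓ t) else ℓ t

lemma aFun_apply (n k : ℕ) (ℓ : Leaf n) (t : Fin n) :
    aFun n k ℓ t =
      if (t : ℕ) = n - k ∧ (∀ s : Fin n, (s : ℕ) < n - k → ℓ s = false) then !(ℓ t) else ℓ t :=
  rfl

lemma aFun_spine (n k : ℕ) (ℓ : Leaf n) (s : Fin n) (hs : (s : ℕ) < n - k) :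
    aFun n k ℓ s = ℓ s := by
  rw [aFun_apply, if_neg]
  rintro ⟨h1, -⟩
  omega

lemma aFun_cond (n k : ℕ) (ℓ : Leaf n) (t : Fin n) :
    ((t : ℕ) = n - k ∧ (∀ s : Fin n, (s : ℕ) < n - k → aFun n k ℓ s = false)) ↔
    ((t : ℕ) = n - k ∧ (∀ s : Fin n, (s : ℕ) < n - k → ℓ s = false)) := by
  constructor
  · rintro ⟨h1, h2⟩
    refine ⟨h1, fun s hs => ?_⟩
    have h := h2 s hs
    rwa [aFun_spine n k ℓ s hs] at h
  · rintro ⟨h1, h2⟩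
    refine ⟨h1, fun s hs => ?_⟩
    rw [aFun_spine n k ℓ s hs]
    exact h2 s hs

lemma aFun_involutive (n k : ℕ) : Function.Involutive (aFun n k) := by
  intro ℓ
  funext t
  rw [show aFun n k (aFun n k ℓ) t =
    (if (t : ℕ) = n - k ∧ (∀ s : Fin n, (s : ℕ) < n - k → aFun n k ℓ s = false)
      then !(aFun n k ℓ t) else aFun n k ℓ t) from rfl]
  by_cases h : (t : ℕ) = n - k ∧ (∀ s : Fin n, (s : ℕ) < n - k → ℓ s = false)
  · rw [if_pos ((aFun_cond n k ℓ t).mpr h), aFun_apply, if_pos h, Bool.not_not]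
  · rw [if_neg (fun hc => h ((aFun_cond n k ℓ t).mp hc)), aFun_apply, if_neg h]

/-- The standard generator `a_k` of `Aut(T_n)` (as a permutation of the leaves). -/
def aPerm (n k : ℕ) : Equiv.Perm (Leaf n) :=
  Function.Involutive.toPerm (aFun n k) (aFun_involutive n k)

lemma aPerm_apply (n k : ℕ) (ℓ : Leaf n) : aPerm n k ℓ = aFun n k ℓ := rfl

/-- The automorphism group `W_n` of the complete binary rooted tree of height `n`,
realized as the subgroup of permutations of the `2^n` leaves which, at every level `m`,
map leaves agreeing in their first `m` coordinates to leaves agreeing in their first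
`m` coordinates. -/
def treeGroup (n : ℕ) : Subgroup (Equiv.Perm (Leaf n)) where
  carrier := {σ | ∀ m : ℕ, ∀ i j : Leaf n,
    (∀ t : Fin n, (t : ℕ) < m → σ i t = σ j t) ↔ (∀ t : Fin n, (t : ℕ) < m → i t = j t)}
  one_mem' := by intro m i j; simp
  mul_mem' := by
    intro a b ha hb m i j
    simpa [Equiv.Perm.mul_apply] using (ha m (b i) (b j)).trans (hb m i j)
  inv_mem' := by
    intro a ha m i j
    simpa using (ha m (a⁻¹ i) (a⁻¹ j)).symm

lemma mem_treeGroup (n : ℕ) (σ : Equiv.Perm (Leaf n)) :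
    σ ∈ treeGroup n ↔ ∀ m : ℕ, ∀ i j : Leaf n,
      (∀ t : Fin n, (t : ℕ) < m → σ i t = σ j t) ↔ (∀ t : Fin n, (t : ℕ) < m → i t = j t) :=
  Iff.rfl

lemma aPerm_mem (n k : ℕ) : aPerm n k ∈ treeGroup n := by
  have D : ∀ (i j : Leaf n) (m : ℕ), (∀ t : Fin n, (t : ℕ) < m → i t = j t) →
      (∀ t : Fin n, (t : ℕ) < m → aFun n k i t = aFun n k j t) := by
    intro i j m hij t ht
    rw [aFun_apply, aFun_apply]
    by_cases h1 : (t : ℕ) = n - k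
    · have hsp : (∀ s : Fin n, (s : ℕ) < n - k → i s = false) ↔
          (∀ s : Fin n, (s : ℕ) < n - k → j s = false) := by
        constructor
        · intro h s hs
          rw [← hij s (by omega)]; exact h s hs
        · intro h s hs
          rw [hij s (by omega)]; exact h s hs
      by_cases h2 : ∀ s : Fin n, (s : ℕ) < n - k → i s = false
      · rw [if_pos ⟨h1, h2⟩, if_pos ⟨h1, hsp.mp h2⟩, hij t ht]
      · rw [if_neg (fun hc => h2 hc.2), if_neg (fun hc => h2 (hsp.mpr hc.2)), hij t ht]
    · rw [if_neg (fun hc => h1 hc.1), if_neg (fun hc => h1 hc.1), hij t ht]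
  rw [mem_treeGroup]
  intro m i j
  constructor
  · intro h t ht
    have h2 := D (aPerm n k i) (aPerm n k j) m (fun t ht => by
      simpa [aPerm_apply] using h t ht) t ht
    rwa [show aFun n k (aPerm n k i) = i from aFun_involutive n k i,
      show aFun n k (aPerm n k j) = j from aFun_involutive n k j] at h2
  · intro h t ht
    simpa [aPerm_apply] using D i j m h t ht

/-- The standard generator `a_k` as an element of `W_n`. -/
def aEl (n k : ℕ) : ↥(treeGroup n) := ⟨aPerm n k, aPerm_mem n k⟩

/-- The standard `k`-odometer `x_k = a_1 a_2 ⋯ a_k`, viewed inside `W_n`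
(via the natural inclusion of `W_k` acting on the left part of the tree). -/
def xEl (n k : ℕ) : ↥(treeGroup n) :=
  (((List.range k).map fun j => aEl n (j + 1))).prod

/-- `v_i = x_{i+2}^2`, viewed inside `W_n`. -/
def vEl (n i : ℕ) : ↥(treeGroup n) := (xEl n (i + 2)) ^ 2

/-- `m_n = a_{n-1} (x_{n-2})^{x_n}` (with `g^h = h g h⁻¹`), viewed inside `W_n`. -/
def mEl (n : ℕ) : ↥(treeGroup n) :=
  aEl n (n - 1) * (xEl n n * xEl n (n - 2) * (xEl n n)⁻¹)

/-- A permutation of the leaves of `T_n` is an `n`-odometer if it acts transitively on them. -/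
def IsOdometer (n : ℕ) (σ : Equiv.Perm (Leaf n)) : Prop :=
  ∀ i j : Leaf n, ∃ t : ℕ, (σ ^ t) i = j

/-- The generating set `{v_i : i ≤ k - 3}` of `V_k`, inside `W_n`. -/
def VsetK (n k : ℕ) : Set ↥(treeGroup n) := {g | ∃ i : ℕ, i + 3 ≤ k ∧ g = vEl n i}

/-- The subgroup `V_k = ⟨v_{k-3}, …, v_0⟩ ≤ W_n`. -/
def VgrpK (n k : ℕ) : Subgroup ↥(treeGroup n) := Subgroup.closure (VsetK n k)

/-- The group `M_k = ⟨x_k, v_{k-3}, …, v_0⟩` of Section 4, inside `W_n`. -/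
def MgrpK (n k : ℕ) : Subgroup ↥(treeGroup n) :=
  Subgroup.closure (insert (xEl n k) (VsetK n k))

/-- The normal closure `N_k = V_k^{M_k}` of `V_k` in `M_k`, inside `W_n`. -/
def NgrpK (n k : ℕ) : Subgroup ↥(treeGroup n) :=
  Subgroup.closure {g | ∃ m ∈ MgrpK n k, ∃ v ∈ VsetK n k, g = m * v * m⁻¹}

/-- The group `M_n = ⟨x_n, m_n, v_{n-3}, …, v_0⟩` of Section 5. -/
def MgrpB (n : ℕ) : Subgroup ↥(treeGroup n) :=
  Subgroup.closure (insert (xEl n n) (insert (mEl n) (VsetK n n)))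

/-- The normal closure `N_n = ⟨m_n, v_{n-3}, …, v_0⟩^{M_n}` of Section 5. -/
def NgrpB (n : ℕ) : Subgroup ↥(treeGroup n) :=
  Subgroup.closure {g | ∃ m ∈ MgrpB n, ∃ h ∈ insert (mEl n) (VsetK n n), g = m * h * m⁻¹}

/-- `U_n = V_n^{⟨x_n⟩}`. -/
def Ugrp (n : ℕ) : Subgroup ↥(treeGroup n) :=
  Subgroup.closure {g | ∃ m ∈ Subgroup.closure {xEl n n}, ∃ v ∈ VsetK n n, g = m * v * m⁻¹}


/-! ### Auxiliary numeric machinery -/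

/-- numeric decoding of a leaf -/
def dec (n : ℕ) (v : ℕ) : Leaf n := fun t => v.testBit t

lemma dec_surj (n : ℕ) (ℓ : Leaf n) : ∃ v : ℕ, v < 2^n ∧ dec n v = ℓ := by
  classical
  set f : Fin n → Fin 2 := fun i => if ℓ i then 1 else 0 with hf
  refine ⟨(finFunctionFinEquiv f : Fin (2^n)).val, (finFunctionFinEquiv f).isLt, ?_⟩
  funext t
  have h := finFunctionFinEquiv_symm_apply_val (finFunctionFinEquiv f) t
  rw [Equiv.symm_apply_apply] at h
  show Nat.testBit _ t = ℓ t
  rw [Nat.testBit_eq_decide_div_mod_eq, ← h, hf]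
  cases hl : ℓ t <;> simp [hl]

/-- low bits false iff divisible by 2^j -/
lemma dvd_iff_lowbits (j v : ℕ) : 2^j ∣ v ↔ ∀ i < j, v.testBit i = false := by
  constructor
  · rintro ⟨q, rfl⟩ i hi
    rw [Nat.testBit_two_pow_mul]
    simp [Nat.not_le_of_lt hi]
  · intro h
    have hm : v % 2^j = 0 := by
      apply Nat.eq_of_testBit_eq
      intro i
      rw [Nat.testBit_mod_two_pow, Nat.zero_testBit]
      by_cases hij : i < j
      · simp [hij, h i hij]
      · simp [hij]
    exact Nat.dvd_of_mod_eq_zero hm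

/-- bits of `2^j*(2q+1)` vs `2^j*(2q)`: they differ exactly at position `j`. -/
lemma bit_flip (j q t : ℕ) :
    Nat.testBit (2^j * (2*q+1)) t
      = if t = j then !(Nat.testBit (2^j * (2*q)) t) else Nat.testBit (2^j * (2*q)) t := by
  rw [Nat.testBit_two_pow_mul, Nat.testBit_two_pow_mul]
  rcases lt_trichotomy t j with h | h | h
  · simp [Nat.not_le_of_lt h, Nat.ne_of_lt h]
  · subst h
    simp [Nat.mul_add_mod]
  · have h1 : Nat.testBit (2*q+1) (t-j) = Nat.testBit q (t-j-1) := by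
      have ht : t - j = (t - j - 1) + 1 := by omega
      rw [ht, Nat.testBit_add_one]
      congr 1
      omega
    have h2 : Nat.testBit (2*q) (t-j) = Nat.testBit q (t-j-1) := by
      have ht : t - j = (t - j - 1) + 1 := by omega
      rw [ht, Nat.testBit_add_one]
      congr 1
      omega
    simp [Nat.le_of_lt h, h1, h2, Nat.ne_of_gt h]

/-- The numeric action of the generator `a_k`. -/
def Anum (n k v : ℕ) : ℕ :=
  if 2^(n-k) ∣ v then (if v.testBit (n-k) then v - 2^(n-k) else v + 2^(n-k)) else v

lemma aPerm_dec (n k v : ℕ) (hk : 1 ≤ k) (hkn : k ≤ n) (hv : v < 2^n) :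
    aPerm n k (dec n v) = dec n (Anum n k v) := by
  have hjn : n - k < n := by omega
  set j := n - k with hj
  have hcond : (∀ s : Fin n, (s : ℕ) < j → dec n v s = false) ↔ 2^j ∣ v := by
    rw [dvd_iff_lowbits]
    constructor
    · intro h i hi
      exact h ⟨i, lt_trans hi hjn⟩ hi
    · intro h s hs
      exact h s hs
  funext t
  rw [aPerm_apply, aFun_apply]
  by_cases hd : 2^j ∣ v
  · obtain ⟨w, rfl⟩ := hd
    have htb : Nat.testBit (2^j * w) j = Nat.testBit w 0 := by
      rw [Nat.testBit_two_pow_mul]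
      simp
    rcases Nat.even_or_odd w with ⟨q, hq⟩ | ⟨q, hq⟩
    · -- even: add
      have hw : w = 2*q := by omega
      subst hw
      have htb' : Nat.testBit (2^j * (2*q)) j = false := by
        rw [htb]; simp [Nat.mul_mod_right]
      have hA : Anum n k (2^j * (2*q)) = 2^j * (2*q+1) := by
        rw [Anum, if_pos ⟨2*q, rfl⟩, ← hj, htb']
        simp only [Bool.false_eq_true, if_false]
        ring
      rw [hA]
      show _ = Nat.testBit (2^j*(2*q+1)) t
      rw [bit_flip]
      by_cases ht : (t : ℕ) = j
      · rw [if_pos ⟨ht, hcond.mpr ⟨2*q, rfl⟩⟩, if_pos ht]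
        rfl
      · rw [if_neg (fun hc => ht hc.1), if_neg ht]
        rfl
    · -- odd: subtract
      have hw : w = 2*q+1 := by omega
      subst hw
      have htb' : Nat.testBit (2^j * (2*q+1)) j = true := by
        rw [htb]; simp [Nat.mul_add_mod]
      have hA : Anum n k (2^j * (2*q+1)) = 2^j * (2*q) := by
        rw [Anum, if_pos ⟨2*q+1, rfl⟩, ← hj, htb']
        simp only [if_pos]
        have : 2^j * (2*q+1) = 2^j * (2*q) + 2^j := by ring
        omega
      rw [hA]
      show _ = Nat.testBit (2^j*(2*q)) t
      have hbf := bit_flip j q (t : ℕ)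
      by_cases ht : (t : ℕ) = j
      · rw [if_pos ⟨ht, hcond.mpr ⟨2*q+1, rfl⟩⟩]
        show (!(Nat.testBit (2^j*(2*q+1)) (t:ℕ))) = Nat.testBit (2^j*(2*q)) (t:ℕ)
        rw [hbf, if_pos ht, Bool.not_not]
      · rw [if_neg (fun hc => ht hc.1)]
        show Nat.testBit (2^j*(2*q+1)) t = _
        rw [hbf, if_neg ht]
  · rw [Anum, if_neg hd, if_neg (fun hc => hd (hcond.mp hc.2))]

lemma Anum_lt (n k v : ℕ) (hk : 1 ≤ k) (hkn : k ≤ n) (hv : v < 2^n) :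
    Anum n k v < 2^n := by
  rw [Anum]
  split_ifs with h1 h2
  · omega
  · -- bit n-k of v is false, v divisible by 2^(n-k): v + 2^(n-k) < 2^n
    obtain ⟨w, rfl⟩ := h1
    have htb : Nat.testBit (2^(n-k) * w) (n-k) = Nat.testBit w 0 := by
      rw [Nat.testBit_two_pow_mul]; simp
    have hwe : w % 2 = 0 := by
      rcases Nat.even_or_odd w with ⟨q,hq⟩ | ⟨q,hq⟩
      · omega
      · exfalso
        rw [htb] at h2
        simp [Nat.testBit_eq_decide_div_mod_eq] at h2
        omega
    -- v = 2^(n-k) * w with w even, v < 2^n = 2^(n-k) * 2^k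
    have h2n : (2:ℕ)^n = 2^(n-k) * 2^k := by
      rw [← pow_add]
      congr 1
      omega
    have hk0 : (0:ℕ) < 2^k := Nat.two_pow_pos k
    have hj0 : (0:ℕ) < 2^(n-k) := Nat.two_pow_pos _
    have hw2 : w < 2^k := by
      by_contra hcon
      push_neg at hcon
      have : 2^(n-k) * 2^k ≤ 2^(n-k) * w := Nat.mul_le_mul_left _ hcon
      omega
    have hw21 : w + 1 < 2^k := by
      have : (2:ℕ) ∣ 2^k := dvd_pow_self 2 (by omega : k ≠ 0)
      omega
    calc 2^(n-k) * w + 2^(n-k) = 2^(n-k) * (w+1) := by ring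
    _ < 2^(n-k) * 2^k := by
        apply Nat.mul_lt_mul_of_le_of_lt (le_refl _) hw21 hj0
    _ = 2^n := h2n.symm
  · omega
/-- The numeric action of the odometer `x_k`. -/
def Xnum (n k v : ℕ) : ℕ := if 2^(n-k) ∣ v then (v + 2^(n-k)) % 2^n else v

lemma Xnum_lt (n k v : ℕ) (hv : v < 2^n) : Xnum n k v < 2^n := by
  rw [Xnum]
  split_ifs with h
  · exact Nat.mod_lt _ (Nat.two_pow_pos n)
  · exact hv

lemma Xnum_Anum (n k v : ℕ) (hk1 : k+1 ≤ n) (hv : v < 2^n) :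
    Xnum n k (Anum n (k+1) v) = Xnum n (k+1) v := by
  have hnk : n - k = (n - (k+1)) + 1 := by omega
  set d := 2^(n-(k+1)) with hd
  have h2d : (2:ℕ)^(n-k) = 2*d := by rw [hnk, pow_succ]; ring
  have hdpos : 0 < d := Nat.two_pow_pos _
  by_cases hdv : d ∣ v
  · obtain ⟨w, rfl⟩ := hdv
    have htb : Nat.testBit (d * w) (n-(k+1)) = Nat.testBit w 0 := by
      rw [hd, mul_comm (2^(n-(k+1))) w] at *
      rw [mul_comm]
      rw [Nat.testBit_two_pow_mul]
      simp
    rcases Nat.even_or_odd w with ⟨q, hq⟩ | ⟨q, hq⟩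
    · -- w even: Anum adds d, result not divisible by 2d, Xnum k fixes
      have hw : w = 2*q := by omega
      subst hw
      have htb' : Nat.testBit (d * (2*q)) (n-(k+1)) = false := by
        rw [htb]; simp [Nat.mul_mod_right]
      have hA : Anum n (k+1) (d * (2*q)) = d * (2*q) + d := by
        rw [Anum, ← hd, if_pos ⟨2*q, rfl⟩, htb']
        simp
      have hlt : d * (2*q) + d < 2^n := by
        have := Anum_lt n (k+1) (d * (2*q)) (by omega) hk1 hv
        rwa [hA] at this
      rw [hA]
      have hnd : ¬ (2^(n-k) ∣ d * (2*q) + d) := by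
        rw [h2d]
        intro hcon
        have : d * (2*q) + d = d * (2*q+1) := by ring
        rw [this] at hcon
        rw [mul_comm 2 d] at hcon
        have h2 : (2:ℕ) ∣ 2*q+1 :=
          (mul_dvd_mul_iff_left (a := d) (by omega : d ≠ 0)).mp hcon
        omega
      rw [Xnum, if_neg hnd, Xnum, ← hd, if_pos ⟨2*q, rfl⟩, Nat.mod_eq_of_lt hlt]
    · -- w odd: Anum subtracts d, result divisible by 2d
      have hw : w = 2*q+1 := by omega
      subst hw
      have htb' : Nat.testBit (d * (2*q+1)) (n-(k+1)) = true := by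
        rw [htb]; simp [Nat.mul_add_mod]
      have hA : Anum n (k+1) (d * (2*q+1)) = d * (2*q) := by
        rw [Anum, ← hd, if_pos ⟨2*q+1, rfl⟩, htb']
        simp only [if_pos]
        have : d * (2*q+1) = d * (2*q) + d := by ring
        omega
      rw [hA]
      have hdd : 2^(n-k) ∣ d * (2*q) := by
        rw [h2d]
        exact ⟨q, by ring⟩
      rw [Xnum, if_pos hdd, Xnum, ← hd, if_pos ⟨2*q+1, rfl⟩]
      congr 1
      rw [h2d]
      ring
  · -- not divisible: everything fixes
    have hnd2 : ¬ (2^(n-k) ∣ v) := by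
      intro hcon
      exact hdv (dvd_trans ⟨2, by rw [h2d]; ring⟩ hcon)
    rw [Anum, ← hd, if_neg hdv, Xnum, if_neg hnd2, Xnum, ← hd, if_neg hdv]

lemma xEl_zero (n : ℕ) : xEl n 0 = 1 := by simp [xEl]

lemma xEl_succ (n k : ℕ) : xEl n (k+1) = xEl n k * aEl n (k+1) := by
  rw [xEl, xEl, List.range_succ, List.map_append, List.prod_append]
  simp

lemma xEl_dec (n k : ℕ) : k ≤ n → ∀ v, v < 2^n →
    ((xEl n k : ↥(treeGroup n)) : Equiv.Perm (Leaf n)) (dec n v) = dec n (Xnum n k v) := by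
  induction k with
  | zero =>
    intro _ v hv
    rw [xEl_zero]
    have hX : Xnum n 0 v = v := by
      rw [Xnum]
      split_ifs with h
      · simp only [Nat.sub_zero] at h ⊢
        rcases h with ⟨c, rfl⟩
        match c with
        | 0 => simp
        | (c+1) =>
          exfalso
          have : 2^n ≤ 2^n * (c+1) := Nat.le_mul_of_pos_right _ (Nat.succ_pos c)
          omega
      · rfl
    rw [hX]
    rfl
  | succ k ih =>
    intro hkn v hv
    rw [xEl_succ]
    have hcoe : ((xEl n k * aEl n (k+1) : ↥(treeGroup n)) : Equiv.Perm (Leaf n))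
        = (xEl n k : Equiv.Perm (Leaf n)) * (aEl n (k+1) : Equiv.Perm (Leaf n)) := rfl
    rw [hcoe, Equiv.Perm.mul_apply]
    have ha : ((aEl n (k+1) : ↥(treeGroup n)) : Equiv.Perm (Leaf n)) = aPerm n (k+1) := rfl
    rw [ha, aPerm_dec n (k+1) v (by omega) hkn hv,
      ih (by omega) _ (Anum_lt n (k+1) v (by omega) hkn hv), Xnum_Anum n k v hkn hv]

/-- extensionality via numeric decoding -/
lemma perm_ext_dec {n : ℕ} {σ τ : ↥(treeGroup n)}
    (h : ∀ v < 2^n, (σ : Equiv.Perm (Leaf n)) (dec n v) = (τ : Equiv.Perm (Leaf n)) (dec n v)) :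
    σ = τ := by
  apply Subtype.ext
  apply Equiv.ext
  intro ℓ
  obtain ⟨v, hv, rfl⟩ := dec_surj n ℓ
  exact h v hv
lemma Xnum_of_dvd {n k v : ℕ} (h : 2^(n-k) ∣ v) : Xnum n k v = (v + 2^(n-k)) % 2^n :=
  if_pos h

lemma Xnum_of_not_dvd {n k v : ℕ} (h : ¬ 2^(n-k) ∣ v) : Xnum n k v = v :=
  if_neg h

lemma Xnum_dvd_mod {n j v : ℕ} (hj : j ≤ n) (h : 2^j ∣ v) : 2^j ∣ (v + 2^j) % 2^n :=
  (Nat.dvd_mod_iff (pow_dvd_pow 2 hj)).mpr (dvd_add h dvd_rfl)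

/-- `x_{k+1}²` acts numerically by adding `2^(n-k)` on multiples of `2^(n-k-1)`. -/
lemma Xnum_sq (n k v : ℕ) (hk1 : k+1 ≤ n) :
    Xnum n (k+1) (Xnum n (k+1) v)
      = if 2^(n-(k+1)) ∣ v then (v + 2^(n-k)) % 2^n else v := by
  have h2d : (2:ℕ)^(n-k) = 2 * 2^(n-(k+1)) := by
    rw [show n-k = (n-(k+1))+1 by omega, pow_succ]; ring
  by_cases hdv : 2^(n-(k+1)) ∣ v
  · rw [Xnum_of_dvd hdv, Xnum_of_dvd (Xnum_dvd_mod (by omega) hdv), Nat.mod_add_mod,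
      if_pos hdv, h2d]
    congr 1
    omega
  · rw [Xnum_of_not_dvd hdv, Xnum_of_not_dvd hdv, if_neg hdv]

/-- numeric commutation of `x_k` with `x_{k+1}²`. -/
lemma Xnum_comm (n k v : ℕ) (hk1 : k+1 ≤ n) (hv : v < 2^n) :
    Xnum n k (Xnum n (k+1) (Xnum n (k+1) v))
      = Xnum n (k+1) (Xnum n (k+1) (Xnum n k v)) := by
  have h2d : (2:ℕ)^(n-k) = 2 * 2^(n-(k+1)) := by
    rw [show n-k = (n-(k+1))+1 by omega, pow_succ]; ring
  have hMdvd : (2:ℕ)^(n-k) ∣ 2^n := pow_dvd_pow 2 (by omega)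
  have hd2d : (2:ℕ)^(n-(k+1)) ∣ 2^(n-k) := pow_dvd_pow 2 (by omega)
  rw [Xnum_sq n k v hk1, Xnum_sq n k (Xnum n k v) hk1]
  by_cases h2dv : 2^(n-k) ∣ v
  · have hdv : 2^(n-(k+1)) ∣ v := dvd_trans hd2d h2dv
    have hdvd1 : 2^(n-k) ∣ (v + 2^(n-k)) % 2^n :=
      (Nat.dvd_mod_iff hMdvd).mpr (dvd_add h2dv dvd_rfl)
    rw [if_pos hdv, Xnum_of_dvd h2dv,
      Xnum_of_dvd hdvd1, Nat.mod_add_mod,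
      if_pos (dvd_trans hd2d ((Nat.dvd_mod_iff hMdvd).mpr (dvd_add h2dv dvd_rfl)))]
  · by_cases hdv : 2^(n-(k+1)) ∣ v
    · have hnd : ¬ 2^(n-k) ∣ (v + 2^(n-k)) % 2^n := by
        rw [Nat.dvd_mod_iff hMdvd]
        intro hcon
        have h5 := Nat.dvd_sub hcon (dvd_refl (2^(n-k)))
        exact h2dv (by simpa using h5)
      rw [if_pos hdv, Xnum_of_not_dvd hnd, Xnum_of_not_dvd h2dv, if_pos hdv]
    · rw [if_neg hdv, Xnum_of_not_dvd h2dv, if_neg hdv]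

/-- coercion: application of a product. -/
lemma coe_mul_apply {n : ℕ} (g h : ↥(treeGroup n)) (ℓ : Leaf n) :
    ((g * h : ↥(treeGroup n)) : Equiv.Perm (Leaf n)) ℓ
      = (g : Equiv.Perm (Leaf n)) ((h : Equiv.Perm (Leaf n)) ℓ) := rfl

lemma coe_sq_apply {n : ℕ} (g : ↥(treeGroup n)) (ℓ : Leaf n) :
    ((g ^ 2 : ↥(treeGroup n)) : Equiv.Perm (Leaf n)) ℓ
      = (g : Equiv.Perm (Leaf n)) ((g : Equiv.Perm (Leaf n)) ℓ) := by
  rw [sq]; rfl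

/-- the generators are involutions -/
lemma aEl_sq (n k : ℕ) : aEl n k * aEl n k = 1 := by
  apply Subtype.ext
  apply Equiv.ext
  intro ℓ
  exact aFun_involutive n k ℓ

lemma xEl_two (n : ℕ) : xEl n 2 = aEl n 1 * aEl n 2 := by
  rw [xEl, List.range_succ, List.range_succ, List.range_zero]
  simp

/-- `x₂` has order dividing 4 -/
lemma xEl_two_pow_four (n : ℕ) (hn : 2 ≤ n) : (xEl n 2)^4 = 1 := by
  apply perm_ext_dec
  intro v hv
  have h4 : (xEl n 2 : ↥(treeGroup n))^4 = xEl n 2 * xEl n 2 * xEl n 2 * xEl n 2 := by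
    rw [show (4:ℕ) = 1+1+1+1 from rfl, pow_succ, pow_succ, pow_succ, pow_one]
  rw [h4, coe_mul_apply, coe_mul_apply, coe_mul_apply]
  have hD : (2:ℕ)^(n-2) ∣ 2^n := pow_dvd_pow 2 (by omega)
  have ek := fun v hv => xEl_dec n 2 hn v hv
  by_cases hd : 2^(n-2) ∣ v
  · have hx1 : Xnum n 2 v = (v + 2^(n-2)) % 2^n := Xnum_of_dvd hd
    have hdvd1 : 2^(n-2) ∣ Xnum n 2 v := by rw [hx1]; exact Xnum_dvd_mod (by omega) hd
    rw [ek v hv, ek _ (Xnum_lt n 2 v hv), ek _ (Xnum_lt n 2 _ (Xnum_lt n 2 v hv)),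
      ek _ (Xnum_lt n 2 _ (Xnum_lt n 2 _ (Xnum_lt n 2 v hv)))]
    have hx2 : Xnum n 2 (Xnum n 2 v) = (v + 2*2^(n-2)) % 2^n := by
      rw [Xnum_of_dvd hdvd1, hx1, Nat.mod_add_mod]; congr 1; ring
    have hdvd2 : 2^(n-2) ∣ Xnum n 2 (Xnum n 2 v) := by
      rw [hx2, Nat.dvd_mod_iff hD]
      exact dvd_add hd ⟨2, by ring⟩
    have hx3 : Xnum n 2 (Xnum n 2 (Xnum n 2 v)) = (v + 3*2^(n-2)) % 2^n := by
      rw [Xnum_of_dvd hdvd2, hx2, Nat.mod_add_mod]; congr 1; ring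
    have hdvd3 : 2^(n-2) ∣ Xnum n 2 (Xnum n 2 (Xnum n 2 v)) := by
      rw [hx3, Nat.dvd_mod_iff hD]
      exact dvd_add hd ⟨3, by ring⟩
    have hx4' : Xnum n 2 (Xnum n 2 (Xnum n 2 (Xnum n 2 v))) = v := by
      rw [Xnum_of_dvd hdvd3, hx3, Nat.mod_add_mod]
      have h2n : v + 3*2^(n-2) + 2^(n-2) = v + 2^n := by
        rw [show (2:ℕ)^n = 2^(n-2)*2^2 by rw [← pow_add]; congr 1; omega]
        ring
      rw [h2n, Nat.add_mod_right, Nat.mod_eq_of_lt hv]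
    rw [hx4']
    rfl
  · have hfix : Xnum n 2 v = v := Xnum_of_not_dvd hd
    rw [ek v hv, hfix, ek v hv, hfix, ek v hv, hfix, ek v hv, hfix]
    rfl

/-- R2: `x_k` commutes with `x_{k+1}²`. -/
lemma commute_x_xsq (n k : ℕ) (hk1 : k+1 ≤ n) :
    Commute (xEl n k) ((xEl n (k+1))^2) := by
  show _ * _ = _ * _
  apply perm_ext_dec
  intro v hv
  rw [coe_mul_apply, coe_mul_apply, coe_sq_apply, coe_sq_apply]
  have ek := fun v hv => xEl_dec n k (by omega) v hv
  have ek1 := fun v hv => xEl_dec n (k+1) hk1 v hv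
  rw [ek1 v hv, ek1 _ (Xnum_lt _ _ _ hv), ek _ (Xnum_lt _ _ _ (Xnum_lt _ _ _ hv)),
    ek v hv, ek1 _ (Xnum_lt _ _ _ hv), ek1 _ (Xnum_lt _ _ _ (Xnum_lt _ _ _ hv))]
  rw [Xnum_comm n k v hk1 hv]

/-- `x_{k+1}²` agrees with `x_k` on leaves divisible by `2^(n-k)`. -/
lemma xsq_eq_x_on_div (n k v : ℕ) (hk1 : k+1 ≤ n) (hv : v < 2^n) (hdv : 2^(n-k) ∣ v) :
    (((xEl n (k+1))^2 : ↥(treeGroup n)) : Equiv.Perm (Leaf n)) (dec n v)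
      = ((xEl n k : ↥(treeGroup n)) : Equiv.Perm (Leaf n)) (dec n v) := by
  rw [coe_sq_apply]
  have hd2d : (2:ℕ)^(n-(k+1)) ∣ 2^(n-k) := pow_dvd_pow 2 (by omega)
  rw [xEl_dec n (k+1) hk1 v hv, xEl_dec n (k+1) hk1 _ (Xnum_lt _ _ _ hv),
    xEl_dec n k (by omega) v hv]
  rw [Xnum_sq n k v hk1, if_pos (dvd_trans hd2d hdv), Xnum_of_dvd hdv]
/-- support of `m k`: it fixes every leaf not divisible by `2^(n-k+1)`. -/
lemma m_supp (n : ℕ) (m : ℕ → ↥(treeGroup n)) (h2 : m 2 = aEl n 1)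
    (hrec : ∀ k : ℕ, 2 ≤ k → k < n → m (k + 1) = (xEl n k) ^ 2 * m k * (xEl n k)⁻¹) :
    ∀ k, 2 ≤ k → k ≤ n → ∀ v, v < 2^n → ¬ (2^(n-k+1) ∣ v) →
      ((m k : ↥(treeGroup n)) : Equiv.Perm (Leaf n)) (dec n v) = dec n v := by
  intro k hk
  induction k, hk using Nat.le_induction with
  | base =>
    intro hn v hv hnd
    rw [h2]
    show aPerm n 1 (dec n v) = dec n v
    rw [aPerm_dec n 1 v (by omega) (by omega) hv, Anum,
      if_neg (by rw [show n-1 = n-2+1 by omega]; exact hnd)]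
  | succ k hk ih =>
    intro hk1n v hv hnd
    rw [show n-(k+1)+1 = n-k by omega] at hnd
    have hnd' : ¬ (2^(n-k+1) ∣ v) := fun hc =>
      hnd (dvd_trans (pow_dvd_pow 2 (by omega)) hc)
    rw [hrec k hk (by omega)]
    have hxfix : ((xEl n k : ↥(treeGroup n)) : Equiv.Perm (Leaf n)) (dec n v) = dec n v := by
      rw [xEl_dec n k (by omega) v hv, Xnum_of_not_dvd hnd]
    have hxinv : (((xEl n k)⁻¹ : ↥(treeGroup n)) : Equiv.Perm (Leaf n)) (dec n v) = dec n v := by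
      show ((xEl n k : ↥(treeGroup n)) : Equiv.Perm (Leaf n))⁻¹ (dec n v) = dec n v
      nth_rewrite 1 [← hxfix]
      exact Equiv.symm_apply_apply _ _
    rw [coe_mul_apply, coe_mul_apply, hxinv, ih (by omega) v hv hnd', coe_sq_apply,
      hxfix, hxfix]

/-- R3: `m k` commutes with `x_k⁻¹ x_{k+1}²` (they have disjoint supports). -/
lemma commute_m_w (n : ℕ) (m : ℕ → ↥(treeGroup n)) (h2 : m 2 = aEl n 1)
    (hrec : ∀ k : ℕ, 2 ≤ k → k < n → m (k + 1) = (xEl n k) ^ 2 * m k * (xEl n k)⁻¹)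
    (k : ℕ) (hk2 : 2 ≤ k) (hk1 : k+1 ≤ n) :
    Commute (m k) ((xEl n k)⁻¹ * (xEl n (k+1))^2) := by
  show _ * _ = _ * _
  apply perm_ext_dec
  intro v hv
  have hL : ((m k * ((xEl n k)⁻¹ * (xEl n (k+1))^2) : ↥(treeGroup n)) : Equiv.Perm (Leaf n)) (dec n v)
      = ((m k : ↥(treeGroup n)) : Equiv.Perm (Leaf n))
        ((((xEl n k)⁻¹ * (xEl n (k+1))^2 : ↥(treeGroup n)) : Equiv.Perm (Leaf n)) (dec n v)) := rfl
  have hR : ((((xEl n k)⁻¹ * (xEl n (k+1))^2) * m k : ↥(treeGroup n)) : Equiv.Perm (Leaf n)) (dec n v)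
      = ((((xEl n k)⁻¹ * (xEl n (k+1))^2 : ↥(treeGroup n)) : Equiv.Perm (Leaf n)))
        (((m k : ↥(treeGroup n)) : Equiv.Perm (Leaf n)) (dec n v)) := rfl
  rw [hL, hR]
  have hwapp : ∀ u, ((((xEl n k)⁻¹ * (xEl n (k+1))^2 : ↥(treeGroup n))) : Equiv.Perm (Leaf n)) (dec n u)
      = ((xEl n k : ↥(treeGroup n)) : Equiv.Perm (Leaf n))⁻¹
        ((((xEl n (k+1))^2 : ↥(treeGroup n)) : Equiv.Perm (Leaf n)) (dec n u)) := fun u => rfl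
  have wfix : ∀ u, u < 2^n → 2^(n-k) ∣ u →
      ((((xEl n k)⁻¹ * (xEl n (k+1))^2 : ↥(treeGroup n))) : Equiv.Perm (Leaf n)) (dec n u)
        = dec n u := by
    intro u hu hdu
    rw [hwapp u, xsq_eq_x_on_div n k u hk1 hu hdu]
    exact Equiv.symm_apply_apply _ _
  by_cases hdv : 2^(n-k) ∣ v
  · rw [wfix v hv hdv]
    obtain ⟨u, hu, hσu⟩ : ∃ u, u < 2^n ∧ dec n u
        = ((m k : ↥(treeGroup n)) : Equiv.Perm (Leaf n)) (dec n v) := by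
      obtain ⟨u, hu, he⟩ := dec_surj n (((m k : ↥(treeGroup n)) : Equiv.Perm (Leaf n)) (dec n v))
      exact ⟨u, hu, he⟩
    rw [← hσu]
    by_cases hdu : 2^(n-k+1) ∣ u
    · exact (wfix u hu (dvd_trans (pow_dvd_pow 2 (by omega)) hdu)).symm
    · -- m fixes dec u, so σ (dec v) is a fixed point of σ, hence dec v itself
      have hfixu := m_supp n m h2 hrec k hk2 (by omega) u hu hdu
      rw [hσu] at hfixu
      have hvfix : ((m k : ↥(treeGroup n)) : Equiv.Perm (Leaf n)) (dec n v) = dec n v :=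
        ((m k : ↥(treeGroup n)) : Equiv.Perm (Leaf n)).injective hfixu
      rw [hσu, hvfix]
      exact (wfix v hv hdv).symm
  · have hnd1 : ¬ (2^(n-k+1) ∣ v) := fun hc => hdv (dvd_trans (pow_dvd_pow 2 (by omega)) hc)
    have hmv := m_supp n m h2 hrec k hk2 (by omega) v hv hnd1
    rw [hmv]
    have hysq : ∀ u, u < 2^n → (((xEl n (k+1))^2 : ↥(treeGroup n)) : Equiv.Perm (Leaf n)) (dec n u)
        = dec n (Xnum n (k+1) (Xnum n (k+1) u)) := by
      intro u hu
      rw [coe_sq_apply, xEl_dec n (k+1) hk1 u hu, xEl_dec n (k+1) hk1 _ (Xnum_lt _ _ _ hu)]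
    by_cases hd1 : 2^(n-(k+1)) ∣ v
    · have hMdvd : (2:ℕ)^(n-k) ∣ 2^n := pow_dvd_pow 2 (by omega)
      have hndm : ¬ (2^(n-k) ∣ (v + 2^(n-k)) % 2^n) := by
        rw [Nat.dvd_mod_iff hMdvd]
        intro hcon
        have h5 := Nat.dvd_sub hcon (dvd_refl (2^(n-k)))
        exact hdv (by simpa using h5)
      have hw : ((((xEl n k)⁻¹ * (xEl n (k+1))^2 : ↥(treeGroup n))) : Equiv.Perm (Leaf n)) (dec n v)
          = dec n ((v + 2^(n-k)) % 2^n) := by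
        rw [hwapp v, hysq v hv, Xnum_sq n k v hk1, if_pos hd1]
        have hfix2 : ((xEl n k : ↥(treeGroup n)) : Equiv.Perm (Leaf n))
            (dec n ((v + 2^(n-k)) % 2^n)) = dec n ((v + 2^(n-k)) % 2^n) := by
          rw [xEl_dec n k (by omega) _ (Nat.mod_lt _ (Nat.two_pow_pos n)),
            Xnum_of_not_dvd hndm]
        nth_rewrite 1 [← hfix2]
        exact Equiv.symm_apply_apply _ _
      rw [hw]
      exact m_supp n m h2 hrec k hk2 (by omega) _
        (Nat.mod_lt _ (Nat.two_pow_pos n))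
        (fun hc => hndm (dvd_trans (pow_dvd_pow 2 (by omega)) hc))
    · have hw : ((((xEl n k)⁻¹ * (xEl n (k+1))^2 : ↥(treeGroup n))) : Equiv.Perm (Leaf n)) (dec n v)
          = dec n v := by
        rw [hwapp v, hysq v hv, Xnum_sq n k v hk1, if_neg hd1]
        have hfix2 : ((xEl n k : ↥(treeGroup n)) : Equiv.Perm (Leaf n)) (dec n v) = dec n v := by
          rw [xEl_dec n k (by omega) v hv, Xnum_of_not_dvd hdv]
        nth_rewrite 1 [← hfix2]
        exact Equiv.symm_apply_apply _ _
      rw [hw]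
      exact hmv

/-! ### Abstract group-theoretic lemmas -/

lemma aux_comm_w {G : Type*} [Group G] (x y : G) (h1 : x * y^2 = y^2 * x) :
    Commute x (x⁻¹ * y^2) := by
  have ha : x * (x⁻¹ * y^2) = y^2 := by group
  have hb : (x⁻¹ * y^2) * x = y^2 := by
    rw [mul_assoc, ← h1, ← mul_assoc, inv_mul_cancel, one_mul]
  show x * (x⁻¹*y^2) = (x⁻¹*y^2) * x
  rw [ha, hb]

lemma conj_pow_reduce {G : Type*} [Group G] (x w T : G) (F : ℕ)
    (hC : Commute (w^F) T) :
    (x^F * w^F) * T * (x^F * w^F)⁻¹ = x^F * T * (x^F)⁻¹ := by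
  rw [mul_inv_rev]
  calc x^F*w^F*T*((w^F)⁻¹*(x^F)⁻¹) = x^F*(w^F*T)*((w^F)⁻¹*(x^F)⁻¹) := by group
    _ = x^F*(T*w^F)*((w^F)⁻¹*(x^F)⁻¹) := by rw [hC.eq]
    _ = x^F*T*(x^F)⁻¹ := by group

lemma aux_step {G : Type*} [Group G] (x y mm q : G) (F : ℕ)
    (h1 : x * y^2 = y^2 * x) (h2 : Commute mm (x⁻¹ * y^2))
    (hIH : mm⁻¹ * q = x^(F+1) * mm * (x^(F+1))⁻¹) :
    (x^2*mm*x⁻¹)⁻¹ * (x^2 * q) = y^(2*F) * (x^2*mm*x⁻¹) * (y^(2*F))⁻¹ := by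
  have hcx : Commute x (x⁻¹*y^2) := aux_comm_w x y h1
  have hy2 : y^2 = x * (x⁻¹*y^2) := by group
  have hyF : y^(2*F) = x^F * (x⁻¹*y^2)^F := by
    rw [pow_mul]
    nth_rewrite 1 [hy2]
    rw [hcx.mul_pow]
  have c1 : Commute ((x⁻¹*y^2)^F) x := hcx.symm.pow_left F
  have c3 : Commute ((x⁻¹*y^2)^F) (x^2*mm*x⁻¹) :=
    ((c1.pow_right 2).mul_right (h2.symm.pow_left F)).mul_right c1.inv_right
  rw [hyF, conj_pow_reduce x (x⁻¹*y^2) (x^2*mm*x⁻¹) F c3]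
  have hL : (x^2*mm*x⁻¹)⁻¹ * (x^2*q) = x * (mm⁻¹ * q) := by group
  rw [hL, hIH]
  group

lemma aux_base {G : Type*} [Group G] (a b y : G)
    (ha : a*a = 1) (hb : b*b = 1) (hx4 : (a*b)^4 = 1)
    (h1 : (a*b) * y^2 = y^2 * (a*b)) (h2 : Commute a ((a*b)⁻¹ * y^2)) :
    ((a*b)^2*a*(a*b)⁻¹)⁻¹ = y^4 * ((a*b)^2*a*(a*b)⁻¹) * (y^4)⁻¹ := by
  set x := a*b with hx
  have hcx : Commute x (x⁻¹*y^2) := aux_comm_w x y h1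
  have hy2 : y^2 = x * (x⁻¹*y^2) := by group
  have hy4 : y^4 = x^2 * (x⁻¹*y^2)^2 := by
    rw [show (4:ℕ) = 2*2 from rfl, pow_mul]
    nth_rewrite 1 [hy2]
    rw [hcx.mul_pow]
  have c1 : Commute ((x⁻¹*y^2)^2) x := hcx.symm.pow_left 2
  have c3 : Commute ((x⁻¹*y^2)^2) (x^2*a*x⁻¹) :=
    ((c1.pow_right 2).mul_right (h2.symm.pow_left 2)).mul_right c1.inv_right
  rw [hy4, conj_pow_reduce x (x⁻¹*y^2) (x^2*a*x⁻¹) 2 c3]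
  have hainv : a⁻¹ = a := inv_eq_of_mul_eq_one_right ha
  have key : x*a*x = a := by
    have h5 : x*a*x = a*(b*(a*a)*b) := by rw [hx]; group
    rw [h5, ha, mul_one, hb, mul_one]
  have key2 : x*a = a*x⁻¹ := by
    have h6 := congrArg (· * x⁻¹) key
    simpa [mul_assoc] using h6
  have hL : (x^2*a*x⁻¹)⁻¹ = x * a⁻¹ * (x⁻¹ * x⁻¹) := by group
  rw [hL, hainv]
  have hR : x^2*(x^2*a*x⁻¹)*(x^2)⁻¹ = x^4 * (a * (x⁻¹*(x⁻¹*x⁻¹))) := by group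
  rw [hR, hx4, one_mul]
  calc x * a * (x⁻¹ * x⁻¹) = (x*a) * (x⁻¹*x⁻¹) := by group
    _ = a*x⁻¹*(x⁻¹*x⁻¹) := by rw [key2]
    _ = a * (x⁻¹*(x⁻¹*x⁻¹)) := by group
/-- if `m_k ∈ W_n` satisfies `m_2 = a_1` and `m_{k+1} = x_k² m_k x_k⁻¹`,
then for all `n ≥ 3`: `m_n⁻¹ v_{n-3} v_{n-4} ⋯ v_2 v_1 = (m_n)^{x_n^(2^(n-2)+2)}`
(conjugation `g^h = h g h⁻¹`). -/
theorem mSeq_conj_identity (n : ℕ) (hn : 3 ≤ n) (m : ℕ → ↥(treeGroup n))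
    (h2 : m 2 = aEl n 1)
    (hrec : ∀ k : ℕ, 2 ≤ k → k < n → m (k + 1) = (xEl n k) ^ 2 * m k * (xEl n k)⁻¹) :
    (m n)⁻¹ * (((List.range (n - 3)).map fun j => vEl n (n - 3 - j))).prod =
      (xEl n n) ^ (2 ^ (n - 2) + 2) * m n * ((xEl n n) ^ (2 ^ (n - 2) + 2))⁻¹ := by
  have hQsucc : ∀ k, 3 ≤ k →
      (((List.range (k+1-3)).map fun j => vEl n (k+1-3-j))).prod
        = (xEl n k)^2 * (((List.range (k-3)).map fun j => vEl n (k-3-j))).prod := by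
    intro k hk
    rw [show k+1-3 = (k-3)+1 by omega, List.range_succ_eq_map, List.map_cons, List.prod_cons,
      List.map_map]
    have hfun : ((fun j => vEl n (k-3+1-j)) ∘ Nat.succ) = (fun j => vEl n (k-3-j)) := by
      funext j
      show vEl n (k-3+1-(j+1)) = vEl n (k-3-j)
      congr 1
      omega
    rw [hfun]
    congr 1
    show vEl n (k-3+1-0) = (xEl n k)^2
    rw [show k-3+1-0 = k-2 by omega, vEl, show k-2+2 = k by omega]
  have key : ∀ k, 3 ≤ k → k ≤ n →
      (m k)⁻¹ * (((List.range (k-3)).map fun j => vEl n (k-3-j))).prod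
        = (xEl n k) ^ (2^(k-2)+2) * m k * ((xEl n k) ^ (2^(k-2)+2))⁻¹ := by
    intro k hk
    induction k, hk using Nat.le_induction with
    | base =>
      intro h3n
      have hQ3 : (((List.range (3-3)).map fun j => vEl n (3-3-j))).prod = 1 := by
        norm_num
      rw [hQ3, mul_one, hrec 2 le_rfl (by omega), h2, show (2:ℕ)^(3-2)+2 = 4 by norm_num,
        xEl_two n]
      exact aux_base (aEl n 1) (aEl n 2) (xEl n 3) (aEl_sq n 1) (aEl_sq n 2)
        (by rw [← xEl_two n]; exact xEl_two_pow_four n (by omega))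
        (by rw [← xEl_two n]; exact (commute_x_xsq n 2 (by omega)).eq)
        (by rw [← xEl_two n, ← h2]; exact commute_m_w n m h2 hrec 2 le_rfl (by omega))
    | succ k hk ih =>
      intro hk1n
      have hIk := ih (by omega)
      rw [hQsucc k hk, hrec k (by omega) (by omega),
        show (2:ℕ)^(k+1-2)+2 = 2*(2^(k-2)+1) by
          rw [show k+1-2 = (k-2)+1 by omega, pow_succ]; ring]
      exact aux_step (xEl n k) (xEl n (k+1)) (m k)
        (((List.range (k-3)).map fun j => vEl n (k-3-j))).prod (2^(k-2)+1)
        (commute_x_xsq n k (by omega)).eq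
        (commute_m_w n m h2 hrec k (by omega) (by omega))
        (by rw [show 2^(k-2)+1+1 = 2^(k-2)+2 by omega]; exact hIk)
  exact key n hn le_rfl
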